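/- Let A and B be words over the positive integers with no letter in common, and set α = Des(A), β = Des(B) and ζ(α,β) = min(|α| + ℓ(β), ℓ(α) + |β|), where |·| is the sum of the parts and ℓ(·) the number of parts. Then there exists C ∈ A ⧢ B with ℓ(Des(C)) = ζ(α,β), and every D ∈ A ⧢ B satisfies ℓ(Des(D)) ≤ ζ(α,β). -/

import Mathlib

open scoped Classical

namespace SlidePaper

/-- Sum of the first `i` entries of a weak composition of length `n`. -/
def psum {n : ℕ} (a : Fin n → ℕ) (i : ℕ) : ℕ :=
  ∑ j ∈ Finset.univ.filter (fun j : Fin n => (j : ℕ) < i), a j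

/-- `b` dominates `a`: all partial sums of `b` are at least those of `a`. -/
def Dominates {n : ℕ} (b a : Fin n → ℕ) : Prop :=
  ∀ i : Fin (n + 1), psum a i ≤ psum b i

/-- The flattening of a weak composition: the list of its nonzero entries in order. -/
def flat {n : ℕ} (a : Fin n → ℕ) : List ℕ :=
  (List.ofFn a).filter (fun x => x ≠ 0)

/-- `β` refines `α`: `β` splits into consecutive blocks with sums `α₁, α₂, …`. -/
def Refines (β α : List ℕ) : Prop :=
  ∃ L : List (List ℕ), L.flatten = β ∧ L.map List.sum = α

/-- All weak compositions of length `n` with entries at most `k`. -/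
def wcFinset (n k : ℕ) : Finset (Fin n → ℕ) :=
  Fintype.piFinset fun _ => Finset.range (k + 1)

/-- The monomial slide polynomial `𝔐_a`. -/
noncomputable def slideM {n : ℕ} (a : Fin n → ℕ) : MvPolynomial (Fin n) ℤ :=
  ∑ b ∈ (wcFinset n (∑ i, a i)).filter (fun b => Dominates b a ∧ flat b = flat a),
    MvPolynomial.monomial (Finsupp.equivFunOnFinite.symm b) 1

/-- The fundamental slide polynomial `𝔉_a`. -/
noncomputable def slideF {n : ℕ} (a : Fin n → ℕ) : MvPolynomial (Fin n) ℤ :=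
  ∑ b ∈ (wcFinset n (∑ i, a i)).filter (fun b => Dominates b a ∧ Refines (flat b) (flat a)),
    MvPolynomial.monomial (Finsupp.equivFunOnFinite.symm b) 1

/-- A weak composition is quasi-flat if its nonzero entries occupy consecutive positions. -/
def QuasiFlat {n : ℕ} (a : Fin n → ℕ) : Prop :=
  ∀ i j l : Fin n, i ≤ j → j ≤ l → a i ≠ 0 → a l ≠ 0 → a j ≠ 0

/-- `b` strongly dominates `a`. -/
def StronglyDominates {n : ℕ} (b a : Fin n → ℕ) : Prop :=
  Dominates b a ∧ ∀ c : Fin n → ℕ, Dominates c a → flat c = flat b → Dominates c b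

/-- The exponent vector placing the parts of `α` at the positions `i`. -/
noncomputable def placeExp {n : ℕ} (α : List ℕ) (i : Fin α.length → Fin n) : Fin n →₀ ℕ :=
  ∑ t : Fin α.length, Finsupp.single (i t) (α.get t)

/-- `f` is quasisymmetric in the variables `x_1, …, x_k` (0-indexed: `x_0, …, x_{k-1}`). -/
def IsQuasisymmetricIn {n : ℕ} (k : ℕ) (f : MvPolynomial (Fin n) ℤ) : Prop :=
  ∀ α : List ℕ, (∀ x ∈ α, 0 < x) →
    ∀ i j : Fin α.length → Fin n, StrictMono i → StrictMono j →
      (∀ t, (i t : ℕ) < k) → (∀ t, (j t : ℕ) < k) →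
      MvPolynomial.coeff (placeExp α i) f = MvPolynomial.coeff (placeExp α j) f

/-- The monomial quasisymmetric polynomial `M_α(x_1, …, x_k)` inside `ℤ[x_1, …, x_n]`. -/
noncomputable def Mqs (n k : ℕ) (α : List ℕ) : MvPolynomial (Fin n) ℤ :=
  ∑ i ∈ (Finset.univ : Finset (Fin α.length → Fin n)).filter
      (fun i : Fin α.length → Fin n => StrictMono i ∧ ∀ t, (i t : ℕ) < k),
    ∏ t : Fin α.length, (MvPolynomial.X (i t) : MvPolynomial (Fin n) ℤ) ^ α.get t

/-- The fundamental quasisymmetric polynomial `F_α(x_1, …, x_k)` inside `ℤ[x_1, …, x_n]`. -/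
noncomputable def Fqs (n k : ℕ) (α : List ℕ) : MvPolynomial (Fin n) ℤ :=
  ∑ c ∈ (Finset.univ : Finset (Composition α.sum)).filter
      (fun c => Refines c.blocks α ∧ c.blocks.length ≤ k),
    Mqs n k c.blocks

/-- Place the weak composition `a` (of length `N`) at offset `k` inside length `M`. -/
def shiftComp {N : ℕ} (k M : ℕ) (a : Fin N → ℕ) : Fin M → ℕ :=
  fun i => if h : k ≤ (i : ℕ) ∧ (i : ℕ) - k < N then a ⟨(i : ℕ) - k, h.2⟩ else 0

/-- Spread the values `g` to positions `ι` inside a weak composition of length `n`. -/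
def spread {l n : ℕ} (ι : Fin l → Fin n) (g : Fin l → ℕ) : Fin n → ℕ :=
  fun i => ∑ k, if ι k = i then g k else 0

/-- The monomial quasisymmetric function `M_α` in infinitely many variables. -/
noncomputable def MqsFun (α : List ℕ) : MvPowerSeries ℕ ℤ :=
  fun d => if ∃ i : Fin α.length → ℕ, StrictMono i ∧
      d = ∑ t : Fin α.length, Finsupp.single (i t) (α.get t) then 1 else 0

/-- The fundamental quasisymmetric function `F_α` in infinitely many variables. -/
noncomputable def FqsFun (α : List ℕ) : MvPowerSeries ℕ ℤ :=
  ∑ c ∈ (Finset.univ : Finset (Composition α.sum)).filter (fun c => Refines c.blocks α),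
    MqsFun c.blocks

/-- The cells of the Young diagram of `lam` (French notation): row `r` (from the
bottom, 0-indexed) has `lam.get r` cells. -/
abbrev Cells (lam : List ℕ) := Σ r : Fin lam.length, Fin (lam.get r)

/-- A filling of `lam` with entries in `{1, …, n}` (encoded as `Fin n`) is a semistandard
Young tableau: rows weakly increase left to right, columns strictly increase bottom to top. -/
def IsSSYT {n : ℕ} {lam : List ℕ} (T : Cells lam → Fin n) : Prop :=
  (∀ (r : Fin lam.length) (c c' : Fin (lam.get r)), c ≤ c' → T ⟨r, c⟩ ≤ T ⟨r, c'⟩) ∧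
  (∀ (r r' : Fin lam.length) (c' : Fin (lam.get r')) (h : (c' : ℕ) < lam.get r),
      (r : ℕ) < (r' : ℕ) → T ⟨r, ⟨c', h⟩⟩ < T ⟨r', c'⟩)

/-- The weight of a filling: the `v`-th entry counts the occurrences of the value `v`. -/
def wtT {n : ℕ} {lam : List ℕ} (T : Cells lam → Fin n) : Fin n → ℕ :=
  fun v => (Finset.univ.filter (fun x : Cells lam => T x = v)).card

/-- A filling is quasi-Yamanouchi if for every value `v > 1`, the leftmost occurrence of `v`
lies weakly left of some occurrence of `v - 1`. -/
def IsQY {n : ℕ} {lam : List ℕ} (T : Cells lam → Fin n) : Prop :=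
  ∀ (v : Fin n) (x : Cells lam), T x = v → 0 < (v : ℕ) →
    (∀ y : Cells lam, T y = v → (x.2 : ℕ) ≤ (y.2 : ℕ)) →
    ∃ z : Cells lam, (T z : ℕ) + 1 = (v : ℕ) ∧ (x.2 : ℕ) ≤ (z.2 : ℕ)

/-- The Schur polynomial `s_lam(x_1, …, x_n)` as the generating function of
semistandard Young tableaux. -/
noncomputable def schurPoly (n : ℕ) (lam : List ℕ) : MvPolynomial (Fin n) ℤ :=
  ∑ T ∈ (Finset.univ : Finset (Cells lam → Fin n)).filter (fun T => IsSSYT T),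
    MvPolynomial.monomial (Finsupp.equivFunOnFinite.symm (wtT T)) 1

/-- One destandardization step on fillings: for some value `v` occurring in `T` whose
leftmost occurrence is strictly right of every occurrence of `v - 1`, every `v` is
decremented to `v - 1`. -/
def TabStep {n : ℕ} {lam : List ℕ} (T T' : Cells lam → Fin n) : Prop :=
  ∃ v : Fin n, 0 < (v : ℕ) ∧ (∃ x, T x = v) ∧
    (∀ x y : Cells lam, T x = v → (T y : ℕ) + 1 = (v : ℕ) → (y.2 : ℕ) < (x.2 : ℕ)) ∧
    ∀ x : Cells lam, (T' x : ℕ) = if T x = v then (v : ℕ) - 1 else (T x : ℕ)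

/-- The reading word of a set of crosses: rows are read from top to bottom, each row from
left to right, the cross in (0-indexed) row `i` and column `j` recording the letter `i + j`
(representing the simple transposition swapping `i + j` and `i + j + 1` of `{0, 1, 2, …}`). -/
def readWord (P : Finset (ℕ × ℕ)) : List ℕ :=
  ((List.range (P.sup Prod.fst + 1)).reverse).flatMap
    (fun i => ((List.range (P.sup Prod.snd + 1)).filter (fun j => decide ((i, j) ∈ P))).map
      (fun j => i + j))

/-- The permutation `s_{i_ℓ} ⋯ s_{i_1}` associated to the word `(i_1, …, i_ℓ)`,
where `s_k` swaps `k` and `k + 1`. -/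
def wordPerm (l : List ℕ) : Equiv.Perm ℕ :=
  ((l.map (fun k => Equiv.swap k (k + 1))).reverse).prod

/-- A word is reduced if no shorter word has the same product. -/
def IsReducedWord (l : List ℕ) : Prop :=
  ∀ l' : List ℕ, wordPerm l' = wordPerm l → l.length ≤ l'.length

/-- `P` is a reduced pipe dream of shape `w`: the pipes trace out `w` and no two pipes
cross more than once, equivalently the reading word of `P` is a reduced word for `w`. -/
def IsPD (w : Equiv.Perm ℕ) (P : Finset (ℕ × ℕ)) : Prop :=
  wordPerm (readWord P) = w ∧ IsReducedWord (readWord P)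

/-- `P` is a quasi-Yamanouchi pipe dream of shape `w`: for every row, the westernmost cross
is in the first column or lies weakly west of some cross in the row above. -/
def IsQPD (w : Equiv.Perm ℕ) (P : Finset (ℕ × ℕ)) : Prop :=
  IsPD w P ∧ ∀ i j : ℕ, (i, j) ∈ P → (∀ j', (i, j') ∈ P → j ≤ j') →
    (j = 0 ∨ ∃ j', (i + 1, j') ∈ P ∧ j ≤ j')

/-- One destandardization step on pipe dreams: a row with no cross in the first column,
all of whose crosses lie strictly east of every cross in the row above, has all its
crosses moved one step northwest. -/
def PDStep (P P' : Finset (ℕ × ℕ)) : Prop :=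
  ∃ r : ℕ, (∃ j, (r, j) ∈ P) ∧ (r, 0) ∉ P ∧
    (∀ j j', (r, j) ∈ P → (r + 1, j') ∈ P → j' < j) ∧
    P' = P.filter (fun p => p.1 ≠ r) ∪
      (P.filter (fun p => p.1 = r)).image (fun p => (r + 1, p.2 - 1))

/-- The number of crosses of `P` in (0-indexed) row `i`. -/
def rowWt (P : Finset (ℕ × ℕ)) (i : ℕ) : ℕ := (P.filter (fun p => p.1 = i)).card

/-- The weight of a pipe dream, as a weak composition of length `n`. -/
def wtFin (n : ℕ) (P : Finset (ℕ × ℕ)) : Fin n → ℕ := fun i => rowWt P (i : ℕ)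

/-- The flattened weight of a pipe dream: the list of nonzero row counts, bottom row first. -/
def flatWt (P : Finset (ℕ × ℕ)) : List ℕ :=
  ((List.range (P.sup Prod.fst + 1)).map (rowWt P)).filter (fun x => x ≠ 0)

/-- The Schubert polynomial of `w` in the variables `x_1, …, x_n`, as the generating
function of reduced pipe dreams of shape `w`. -/
noncomputable def SchubertPoly (n : ℕ) (w : Equiv.Perm ℕ) : MvPolynomial (Fin n) ℤ :=
  ∑ᶠ P ∈ {P : Finset (ℕ × ℕ) | IsPD w P},
    MvPolynomial.monomial (Finsupp.equivFunOnFinite.symm (wtFin n P)) 1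

/-- The Lehmer code of `w` (0-indexed): `lehmer w i` counts `j > i` with `w j < w i`. -/
noncomputable def lehmer (w : Equiv.Perm ℕ) (i : ℕ) : ℕ :=
  Set.ncard {j : ℕ | i < j ∧ w j < w i}

/-- The Lehmer code of `w` as a weak composition of length `n`. -/
noncomputable def lehmerFin (n : ℕ) (w : Equiv.Perm ℕ) : Fin n → ℕ :=
  fun i => lehmer w (i : ℕ)

/-- The number of inversions of `w`. -/
noncomputable def invCount (w : Equiv.Perm ℕ) : ℕ :=
  Set.ncard {p : ℕ × ℕ | p.1 < p.2 ∧ w p.2 < w p.1}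

/-- The largest entry of the Lehmer code of `w`. -/
noncomputable def maxLehmer (w : Equiv.Perm ℕ) : ℕ :=
  sSup (Set.range (lehmer w))

/-- The (0-indexed) position of the first descent of `w`. -/
noncomputable def firstDescent (w : Equiv.Perm ℕ) : ℕ :=
  sInf {i : ℕ | w (i + 1) < w i}

/-- `δ(w) = 1` if every position attaining `max(L(w))` is at or before the first descent,
and `δ(w) = 0` otherwise. -/
noncomputable def delta (w : Equiv.Perm ℕ) : ℤ :=
  if ∀ i : ℕ, lehmer w i = maxLehmer w → i ≤ firstDescent w then 1 else 0

/-- `η(w) = inv(w) − max(L(w)) + δ(w) − min{i : w_i > w_{i+1}}`. -/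
noncomputable def eta (w : Equiv.Perm ℕ) : ℤ :=
  (invCount w : ℤ) - (maxLehmer w : ℤ) + delta w - ((firstDescent w : ℤ) + 1)

/-- The decomposition of a list into maximal strictly increasing runs. -/
def runsStrict : List ℕ → List (List ℕ)
  | [] => []
  | x :: rest =>
    match runsStrict rest, rest with
    | r :: rs, y :: _ => if x < y then (x :: r) :: rs else [x] :: r :: rs
    | _, _ => [[x]]

/-- The descent composition of a word: lengths of its maximal increasing runs, a new run
beginning whenever a letter is followed by a weakly smaller letter. -/
def desStrict (l : List ℕ) : List ℕ := (runsStrict l).map List.length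

/-- The decomposition of a list into maximal weakly increasing runs. -/
def runsWeak : List ℕ → List (List ℕ)
  | [] => []
  | x :: rest =>
    match runsWeak rest, rest with
    | r :: rs, y :: _ => if x ≤ y then (x :: r) :: rs else [x] :: r :: rs
    | _, _ => [[x]]

/-- The descent composition of a word: the lengths of its maximal weakly increasing runs. -/
def desComp (l : List ℕ) : List ℕ := (runsWeak l).map List.length

/-- The permutation `1^m × w`, fixing `0, …, m-1` and acting by `w` shifted by `m` above. -/
def shiftPerm (m : ℕ) (w : Equiv.Perm ℕ) : Equiv.Perm ℕ where
  toFun i := if i < m then i else w (i - m) + m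
  invFun i := if i < m then i else w.symm (i - m) + m
  left_inv i := by
    dsimp only
    by_cases h : i < m
    · simp [h]
    · have h2 : ¬ (w (i - m) + m < m) := by omega
      rw [if_neg h, if_neg h2, Nat.add_sub_cancel, Equiv.symm_apply_apply]
      omega
  right_inv i := by
    dsimp only
    by_cases h : i < m
    · simp [h]
    · have h2 : ¬ (w.symm (i - m) + m < m) := by omega
      rw [if_neg h, if_neg h2, Nat.add_sub_cancel, Equiv.apply_symm_apply]
      omega

/-- The quasi-shuffle product of two (strong) compositions, as a multiset of compositions. -/
def qShuffle : List ℕ → List ℕ → Multiset (List ℕ)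
  | [], β => {β}
  | α, [] => {α}
  | a :: α, b :: β =>
      ((qShuffle α (b :: β)).map (a :: ·)) + ((qShuffle (a :: α) β).map (b :: ·)) +
        ((qShuffle α β).map ((a + b) :: ·))
termination_by α β => α.length + β.length
decreasing_by all_goals (simp only [List.length_cons]; omega)

def shuffles : List ℕ → List ℕ → Multiset (List ℕ)
  | [], B => {B}
  | A, [] => {A}
  | x :: A, y :: B =>
      ((shuffles A (y :: B)).map (x :: ·)) + ((shuffles (x :: A) B).map (y :: ·))
termination_by A B => A.length + B.length
decreasing_by all_goals (simp only [List.length_cons]; omega)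

/-- The word `(2n-1)^{a_1} (2n-3)^{a_2} ⋯ 1^{a_n}` associated to a weak composition `a`. -/
def wordA {n : ℕ} (a : Fin n → ℕ) : List ℕ :=
  (List.ofFn (fun i : Fin n => List.replicate (a i) (2 * n - 2 * (i : ℕ) - 1))).flatten

/-- The word `(2n)^{b_1} (2n-2)^{b_2} ⋯ 2^{b_n}` associated to a weak composition `b`. -/
def wordB {n : ℕ} (b : Fin n → ℕ) : List ℕ :=
  (List.ofFn (fun i : Fin n => List.replicate (b i) (2 * n - 2 * (i : ℕ)))).flatten

/-- A list (padded with trailing zeros) dominates a weak composition of length `n`. -/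
def DominatesList {n : ℕ} (l : List ℕ) (a : Fin n → ℕ) : Prop :=
  ∀ i : Fin (n + 1), psum a (i : ℕ) ≤ ((l.take (i : ℕ)).sum)

/-- The number of letters of the `A`-word (the odd letters) in the `k`-th weakly
increasing run of `C`. -/
def runCountA (C : List ℕ) (k : Fin (runsWeak C).length) : ℕ :=
  (((runsWeak C).get k).filter (fun z => z % 2 = 1)).length

/-- The number of letters of the `B`-word (the even letters) in the `k`-th weakly
increasing run of `C`. -/
def runCountB (C : List ℕ) (k : Fin (runsWeak C).length) : ℕ :=
  (((runsWeak C).get k).filter (fun z => z % 2 = 0)).length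

/-- The length of the `k`-th weakly increasing run of `C`. -/
def runLen (C : List ℕ) (k : Fin (runsWeak C).length) : ℕ :=
  ((runsWeak C).get k).length

/-- `c = bump_{(a,b)}(C)`: the unique weak composition of length `n` obtained by inserting
zero parts into `Des(C)` so that the correspondingly placed `Des_A` and `Des_B` dominate
`a` and `b`, minimal in dominance order among all such insertions. -/
def IsBumpS {n : ℕ} (a b : Fin n → ℕ) (C : List ℕ) (c : Fin n → ℕ) : Prop :=
  ∃ ι : Fin (runsWeak C).length → Fin n, StrictMono ι ∧
    c = spread ι (runLen C) ∧
    Dominates (spread ι (runCountA C)) a ∧ Dominates (spread ι (runCountB C)) b ∧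
    ∀ ι' : Fin (runsWeak C).length → Fin n, StrictMono ι' →
      Dominates (spread ι' (runCountA C)) a → Dominates (spread ι' (runCountB C)) b →
      Dominates (spread ι' (runLen C)) c

/-- The multiplicity `[c ∣ a ⧢ b]` of `c` in the slide product of `a` and `b`: the number of
shuffles `C` of the words of `a` and `b` lying in the shuffle set `SS(a,b)` with
`bump_{(a,b)}(C) = c`. -/
noncomputable def slideMult {n : ℕ} (a b c : Fin n → ℕ) : ℕ :=
  Multiset.card ((shuffles (wordA a) (wordB b)).filter
    (fun C => DominatesList ((runsWeak C).map
        (fun r => (r.filter (fun z => z % 2 = 1)).length)) a ∧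
      DominatesList ((runsWeak C).map (fun r => (r.filter (fun z => z % 2 = 0)).length)) b ∧
      IsBumpS a b C c))

/-- Membership in the quasi-shuffle set `QSS(a,b)`: a pair `(γ_a, γ_b)` of weak compositions
of a common length at most `n` with `γ_a ≥ a`, `flat(γ_a) = flat(a)`, `γ_b ≥ b`,
`flat(γ_b) = flat(b)` (after padding with trailing zeros), and all entries of
`γ_a + γ_b` positive. -/
def InQSS {n : ℕ} (a b : Fin n → ℕ) (x : (l : ℕ) × (Fin l → ℕ) × (Fin l → ℕ)) : Prop :=
  x.1 ≤ n ∧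
  Dominates (shiftComp 0 n x.2.1) a ∧ flat x.2.1 = flat a ∧
  Dominates (shiftComp 0 n x.2.2) b ∧ flat x.2.2 = flat b ∧
  ∀ k : Fin x.1, 0 < x.2.1 k + x.2.2 k

/-- `c = bump_{(a,b)}(γ_a, γ_b)`: the unique weak composition `c` of length `n` with
`flat(c) = γ_a + γ_b` whose decomposition `c = c_a + c_b` satisfies `c_a ≥ a` and
`c_b ≥ b`, minimal in dominance order among all such compositions. -/
def IsBumpQ {n : ℕ} (a b : Fin n → ℕ) (x : (l : ℕ) × (Fin l → ℕ) × (Fin l → ℕ))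
    (c : Fin n → ℕ) : Prop :=
  ∃ ι : Fin x.1 → Fin n, StrictMono ι ∧
    c = spread ι (fun k => x.2.1 k + x.2.2 k) ∧
    Dominates (spread ι x.2.1) a ∧ Dominates (spread ι x.2.2) b ∧
    ∀ ι' : Fin x.1 → Fin n, StrictMono ι' →
      Dominates (spread ι' x.2.1) a → Dominates (spread ι' x.2.2) b →
      Dominates (spread ι' (fun k => x.2.1 k + x.2.2 k)) c

/-- The multiplicity `[c ∣ a ⧻ b]` of `c` in the quasi-slide product of `a` and `b`: the
number of pairs in the quasi-shuffle set `QSS(a,b)` whose bump is `c`. -/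
noncomputable def qsMult {n : ℕ} (a b c : Fin n → ℕ) : ℕ :=
  Nat.card {x : (l : ℕ) × (Fin l → ℕ) × (Fin l → ℕ) // InQSS a b x ∧ IsBumpQ a b x c}

/-- The Stanley symmetric function `S_w`. -/
noncomputable def StanleySym (w : Equiv.Perm ℕ) : MvPowerSeries ℕ ℤ :=
  ∑ᶠ l ∈ {l : List ℕ | wordPerm l = w ∧ IsReducedWord l}, FqsFun (desStrict l)

lemma shuffles_nil (B : List ℕ) : shuffles [] B = {B} := by rw [shuffles]
lemma shuffles_cons_nil (x : ℕ) (A : List ℕ) : shuffles (x::A) [] = {x::A} := by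
  rw [shuffles]; simp
lemma shuffles_cons_cons (x y : ℕ) (A B : List ℕ) : shuffles (x::A) (y::B) =
    ((shuffles A (y :: B)).map (x :: ·)) + ((shuffles (x :: A) B).map (y :: ·)) := by
  rw [shuffles]

lemma runsWeak_cons (x : ℕ) (rest : List ℕ) : runsWeak (x :: rest) =
    match runsWeak rest, rest with
    | r :: rs, y :: _ => if x ≤ y then (x :: r) :: rs else [x] :: r :: rs
    | _, _ => [[x]] := rfl

lemma runsWeak_ne_nil (l : List ℕ) (h : l ≠ []) : runsWeak l ≠ [] := by
  match l with
  | x :: rest =>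
    rw [runsWeak_cons]
    rcases h1 : runsWeak rest with _ | ⟨r, rs⟩ <;> rcases rest with _ | ⟨y, t⟩ <;>
      simp_all <;> split <;> simp

lemma runsWeak_cons_cons (x y : ℕ) (t : List ℕ) :
    ∃ r rs, runsWeak (y :: t) = r :: rs ∧
      runsWeak (x :: y :: t) = if x ≤ y then (x :: r) :: rs else [x] :: r :: rs := by
  obtain ⟨r, rs, h⟩ := List.exists_cons_of_ne_nil (runsWeak_ne_nil (y::t) (by simp))
  refine ⟨r, rs, h, ?_⟩
  rw [runsWeak_cons, h]

/-- number of weak ascents (adjacent pairs `x ≤ y`). -/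
def asc : List ℕ → ℕ
  | [] => 0
  | [_] => 0
  | x :: y :: t => (if x ≤ y then 1 else 0) + asc (y :: t)

@[simp] lemma asc_nil : asc [] = 0 := rfl
@[simp] lemma asc_single (x : ℕ) : asc [x] = 0 := rfl
lemma asc_cons_cons (x y : ℕ) (t : List ℕ) :
    asc (x :: y :: t) = (if x ≤ y then 1 else 0) + asc (y :: t) := rfl

@[simp] lemma desComp_nil : desComp [] = [] := rfl
@[simp] lemma desComp_single (x : ℕ) : desComp [x] = [1] := rfl

lemma desComp_cons_cons_length (x y : ℕ) (t : List ℕ) :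
    (desComp (x :: y :: t)).length =
      (if x ≤ y then 0 else 1) + (desComp (y :: t)).length := by
  obtain ⟨r, rs, h1, h2⟩ := runsWeak_cons_cons x y t
  simp only [desComp, h1, h2]
  split <;> simp <;> omega

lemma desComp_cons_cons_sum (x y : ℕ) (t : List ℕ) :
    (desComp (x :: y :: t)).sum = 1 + (desComp (y :: t)).sum := by
  obtain ⟨r, rs, h1, h2⟩ := runsWeak_cons_cons x y t
  simp only [desComp, h1, h2]
  split <;> simp <;> omega

lemma desComp_sum (l : List ℕ) : (desComp l).sum = l.length := by
  induction l with
  | nil => simp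
  | cons x t ih =>
    rcases t with _ | ⟨y, t'⟩
    · simp
    · rw [desComp_cons_cons_sum]; simp at ih ⊢; omega

lemma desComp_length_asc (l : List ℕ) : (desComp l).length + asc l = l.length := by
  induction l with
  | nil => simp
  | cons x t ih =>
    rcases t with _ | ⟨y, t'⟩
    · simp
    · rw [desComp_cons_cons_length, asc_cons_cons]
      simp only [List.length_cons] at ih ⊢
      split <;> omega

lemma length_of_mem_shuffles :
    ∀ (A B D : List ℕ), D ∈ shuffles A B → D.length = A.length + B.length := by
  intro A
  induction A with
  | nil => intro B D hD; rw [shuffles_nil] at hD; simp at hD; simp [hD]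
  | cons a A' ihA =>
    intro B
    induction B with
    | nil =>
      intro D hD; rw [shuffles_cons_nil] at hD; simp at hD; simp [hD]
    | cons b B' ihB =>
      intro D hD
      rw [shuffles_cons_cons] at hD
      rcases Multiset.mem_add.1 hD with h | h <;> obtain ⟨E, hE, rfl⟩ := Multiset.mem_map.1 h
      · have := ihA (b :: B') E hE; simp at this ⊢; omega
      · have := ihB E hE; simp at this ⊢; omega

/-- Lower bound on ascents of any shuffle. -/
lemma asc_shuffle_ge :
    ∀ (A B D : List ℕ), D ∈ shuffles A B →
      ∀ l : ℕ, max (asc (l :: A)) (asc (l :: B)) ≤ asc (l :: D) := by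
  intro A
  induction A with
  | nil => intro B D hD l; rw [shuffles_nil] at hD; simp at hD; subst hD; simp
  | cons a A' ihA =>
    intro B
    induction B with
    | nil =>
      intro D hD l; rw [shuffles_cons_nil] at hD; simp at hD; subst hD; simp
    | cons b B' ihB =>
      intro D hD l
      rw [shuffles_cons_cons] at hD
      have key : ∀ u v w : ℕ, (if w ≤ v then 1 else 0) ≤
          (if w ≤ u then 1 else 0) + (if u ≤ v then 1 else 0) := by
        intro u v w; split_ifs <;> omega
      rcases Multiset.mem_add.1 hD with h | h <;> obtain ⟨E, hE, rfl⟩ := Multiset.mem_map.1 h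
      · have hI := ihA (b :: B') E hE a
        have h1 := key a b l
        simp only [asc_cons_cons] at hI ⊢
        omega
      · have hI := ihB E hE b
        have h1 := key b a l
        simp only [asc_cons_cons] at hI ⊢
        omega

/-- Existence of a shuffle attaining the ascent lower bound. -/
lemma exists_shuffle_asc :
    ∀ (A B : List ℕ), (∀ x ∈ A, ∀ y ∈ B, x ≠ y) →
      ∀ l : ℕ, ∃ C ∈ shuffles A B, asc (l :: C) ≤ max (asc (l :: A)) (asc (l :: B)) := by
  intro A
  induction A with
  | nil =>
    intro B _ l
    exact ⟨B, by rw [shuffles_nil]; simp, le_max_right _ _⟩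
  | cons a A' ihA =>
    intro B
    induction B with
    | nil =>
      intro _ l
      exact ⟨a :: A', by rw [shuffles_cons_nil]; simp, le_max_left _ _⟩
    | cons b B' ihB =>
      intro hdisj l
      have hab : a ≠ b := hdisj a (by simp) b (by simp)
      have hcase : ((if l ≤ a then 1 else 0) + (if a ≤ b then 1 else 0) ≤
            (if l ≤ b then 1 else 0)) ∨
          ((if l ≤ b then 1 else 0) + (if b ≤ a then 1 else 0) ≤
            (if l ≤ a then 1 else 0)) := by
        split_ifs <;> omega
      rcases hcase with hc | hc
      · -- take a first
        obtain ⟨C', hC'mem, hC'⟩ := ihA (b :: B')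
          (fun x hx y hy => hdisj x (by simp [hx]) y hy) a
        refine ⟨a :: C', ?_, ?_⟩
        · rw [shuffles_cons_cons, Multiset.mem_add]
          exact Or.inl (Multiset.mem_map.2 ⟨C', hC'mem, rfl⟩)
        · have hB : asc (a :: b :: B') = (if a ≤ b then 1 else 0) + asc (b :: B') :=
            asc_cons_cons _ _ _
          rcases C' with _ | ⟨c, C''⟩
          · -- C' empty: then A' and b::B' are empty, impossible? b::B' nonempty
            have := length_of_mem_shuffles A' (b :: B') [] hC'mem
            simp at this
          · rcases A' with _ | ⟨a₂, A''⟩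
            · simp only [asc_cons_cons, asc_single] at hC' ⊢
              omega
            · simp only [asc_cons_cons] at hC' hB ⊢
              omega
      · -- take b first
        obtain ⟨C', hC'mem, hC'⟩ := ihB
          (fun x hx y hy => hdisj x hx y (by simp [hy])) b
        refine ⟨b :: C', ?_, ?_⟩
        · rw [shuffles_cons_cons, Multiset.mem_add]
          exact Or.inr (Multiset.mem_map.2 ⟨C', hC'mem, rfl⟩)
        · have hB : asc (b :: a :: A') = (if b ≤ a then 1 else 0) + asc (a :: A') :=
            asc_cons_cons _ _ _
          rcases C' with _ | ⟨c, C''⟩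
          · have := length_of_mem_shuffles (a :: A') B' [] hC'mem
            simp at this; omega
          · rcases B' with _ | ⟨b₂, B''⟩
            · simp only [asc_cons_cons, asc_single] at hC' ⊢
              omega
            · simp only [asc_cons_cons] at hC' hB ⊢
              omega

/-- for words `A`, `B` with no common letter, the maximal length of the
descent composition of a shuffle of `A` and `B` is exactly
`ζ(α, β) = min(|α| + ℓ(β), ℓ(α) + |β|)`, and it is attained. -/
theorem shuffle_max_descents (A B : List ℕ) (hA : ∀ x ∈ A, 0 < x) (hB : ∀ x ∈ B, 0 < x)
    (hdisj : ∀ x ∈ A, x ∉ B) (α β : List ℕ) (hα : desComp A = α) (hβ : desComp B = β)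
    (z : ℕ) (hz : z = min (α.sum + β.length) (α.length + β.sum)) :
    (∃ C ∈ shuffles A B, (desComp C).length = z) ∧
    ∀ D ∈ shuffles A B, (desComp D).length ≤ z := by
  subst hα hβ hz
  have hdisj' : ∀ x ∈ A, ∀ y ∈ B, x ≠ y := fun x hx y hy hxy => hdisj x hx (hxy ▸ hy)
  have hsA := desComp_sum A
  have hsB := desComp_sum B
  have hlA := desComp_length_asc A
  have hlB := desComp_length_asc B
  rcases A with _ | ⟨a, A'⟩
  · refine ⟨⟨B, by rw [shuffles_nil]; simp, ?_⟩, ?_⟩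
    · simp only [desComp_nil, List.sum_nil, List.length_nil]
      omega
    · intro D hD
      rw [shuffles_nil] at hD
      simp only [Multiset.mem_singleton] at hD
      subst hD
      simp only [desComp_nil, List.sum_nil, List.length_nil]
      omega
  rcases B with _ | ⟨b, B'⟩
  · refine ⟨⟨a :: A', by rw [shuffles_cons_nil]; simp, ?_⟩, ?_⟩
    · simp only [desComp_nil, List.sum_nil, List.length_nil]
      omega
    · intro D hD
      rw [shuffles_cons_nil] at hD
      simp only [Multiset.mem_singleton] at hD
      subst hD
      simp only [desComp_nil, List.sum_nil, List.length_nil]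
      omega
  have upper : ∀ D ∈ shuffles (a :: A') (b :: B'), (desComp D).length ≤
      min ((desComp (a :: A')).sum + (desComp (b :: B')).length)
        ((desComp (a :: A')).length + (desComp (b :: B')).sum) := by
    intro D hD
    have hglen := length_of_mem_shuffles _ _ D hD
    have hge := asc_shuffle_ge _ _ D hD 0
    rcases D with _ | ⟨d, D'⟩
    · simp at hglen
    · have e1 : asc (0 :: a :: A') = 1 + asc (a :: A') := by
        rw [asc_cons_cons]; simp
      have e2 : asc (0 :: b :: B') = 1 + asc (b :: B') := by
        rw [asc_cons_cons]; simp
      have e3 : asc (0 :: d :: D') = 1 + asc (d :: D') := by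
        rw [asc_cons_cons]; simp
      rw [e1, e2, e3] at hge
      have hlD := desComp_length_asc (d :: D')
      omega
  refine ⟨?_, upper⟩
  obtain ⟨C, hCmem, hC⟩ := exists_shuffle_asc _ _ hdisj' 0
  refine ⟨C, hCmem, ?_⟩
  have hu := upper C hCmem
  have hglen := length_of_mem_shuffles _ _ C hCmem
  rcases C with _ | ⟨c, C'⟩
  · simp at hglen
  · have e1 : asc (0 :: a :: A') = 1 + asc (a :: A') := by
      rw [asc_cons_cons]; simp
    have e2 : asc (0 :: b :: B') = 1 + asc (b :: B') := by
      rw [asc_cons_cons]; simp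
    have e3 : asc (0 :: c :: C') = 1 + asc (c :: C') := by
      rw [asc_cons_cons]; simp
    rw [e1, e2, e3] at hC
    have hlC := desComp_length_asc (c :: C')
    omega

end SlidePaper
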